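/- Let A and B be real symmetric n×n matrices and let ε > 0 be a real constant. If A·(I − ε·A) ⪯ B·(I − ε·B) and both A ⪯ (1/(2ε))·I and B ⪯ (1/(2ε))·I, then A ⪯ B. -/

import Mathlib

open Matrix

/-- If `X, Y` are PSD real matrices and `X² - Y²` is PSD, then `X - Y` is PSD. -/
lemma sq_psd_mono {n : ℕ} {X Y : Matrix (Fin n) (Fin n) ℝ}
    (hX : X.PosSemidef) (hY : Y.PosSemidef) (h : (X * X - Y * Y).PosSemidef) :
    (X - Y).PosSemidef := by
  have hD : (X - Y).IsHermitian := hX.1.sub hY.1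
  refine hD.posSemidef_iff_eigenvalues_nonneg.mpr fun i => show 0 ≤ hD.eigenvalues i from ?_
  by_contra hneg
  push_neg at hneg
  set l := hD.eigenvalues i with hl
  set v : Fin n → ℝ := ⇑(hD.eigenvectorBasis i) with hv
  have hv0 : v ≠ 0 := by
    have := hD.eigenvectorBasis.orthonormal.ne_zero i
    intro hc
    apply this
    ext j
    exact congrFun hc j
  have heig : (X - Y) *ᵥ v = l • v := hD.mulVec_eigenvectorBasis i
  -- symmetric pairing
  have hsym : ∀ w : Fin n → ℝ, v ⬝ᵥ ((X - Y) *ᵥ w) = l * (v ⬝ᵥ w) := by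
    intro w
    rw [dotProduct_mulVec, ← mulVec_transpose]
    have : (X - Y)ᵀ = X - Y := by
      have := hD.eq
      exact (conjTranspose_eq_transpose_of_trivial _).symm.trans this
    rw [this, heig]
    simp [smul_dotProduct, smul_eq_mul]
  have hdecomp : X * X - Y * Y = X * (X - Y) + (X - Y) * Y := by noncomm_ring
  have key : v ⬝ᵥ ((X * X - Y * Y) *ᵥ v)
      = l * (v ⬝ᵥ (X *ᵥ v)) + l * (v ⬝ᵥ (Y *ᵥ v)) := by
    rw [hdecomp, add_mulVec, dotProduct_add, ← mulVec_mulVec, ← mulVec_mulVec, heig,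
      mulVec_smul, dotProduct_smul, hsym]
    simp [smul_eq_mul]
  have hq1 : 0 ≤ v ⬝ᵥ (X *ᵥ v) := by simpa using hX.dotProduct_mulVec_nonneg v
  have hq2 : 0 ≤ v ⬝ᵥ (Y *ᵥ v) := by simpa using hY.dotProduct_mulVec_nonneg v
  have hpos : 0 ≤ l * (v ⬝ᵥ (X *ᵥ v)) + l * (v ⬝ᵥ (Y *ᵥ v)) := by
    rw [← key]; simpa using h.dotProduct_mulVec_nonneg v
  have hqsum : v ⬝ᵥ (X *ᵥ v) + v ⬝ᵥ (Y *ᵥ v) ≤ 0 := by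
    nlinarith
  have hX0 : v ⬝ᵥ (X *ᵥ v) = 0 := le_antisymm (by linarith) hq1
  have hY0 : v ⬝ᵥ (Y *ᵥ v) = 0 := le_antisymm (by linarith) hq2
  have hXv : X *ᵥ v = 0 := (hX.dotProduct_mulVec_zero_iff v).mp (by simpa using hX0)
  have hYv : Y *ᵥ v = 0 := (hY.dotProduct_mulVec_zero_iff v).mp (by simpa using hY0)
  have : l • v = 0 := by rw [← heig, sub_mulVec, hXv, hYv, sub_zero]
  rcases smul_eq_zero.mp this with h' | h'
  · exact absurd h' (ne_of_lt hneg)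
  · exact hv0 h'

theorem stmt_6 (n : ℕ) (A B : Matrix (Fin n) (Fin n) ℝ) (hA : A.IsSymm) (hB : B.IsSymm)
    (ε : ℝ) (hε : 0 < ε)
    (h1 : (B * (1 - ε • B) - A * (1 - ε • A)).PosSemidef)
    (h2 : ((1 / (2 * ε)) • (1 : Matrix (Fin n) (Fin n) ℝ) - A).PosSemidef)
    (h3 : ((1 / (2 * ε)) • (1 : Matrix (Fin n) (Fin n) ℝ) - B).PosSemidef) :
    (B - A).PosSemidef := by
  set c : ℝ := 1 / (2 * ε) with hc
  set X : Matrix (Fin n) (Fin n) ℝ := c • 1 - A with hX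
  set Y : Matrix (Fin n) (Fin n) ℝ := c • 1 - B with hY
  have hsq : X * X - Y * Y = ε⁻¹ • (B * (1 - ε • B) - A * (1 - ε • A)) := by
    have hε' : ε ≠ 0 := ne_of_gt hε
    simp only [hX, hY, hc, sub_mul, mul_sub, smul_mul_assoc, mul_smul_comm, one_mul, mul_one,
      smul_sub, smul_smul]
    field_simp
    module
  have hpsd : (X * X - Y * Y).PosSemidef := by
    rw [hsq]
    refine PosSemidef.of_dotProduct_mulVec_nonneg ?_ (fun x => ?_)
    · show _ = _
      rw [conjTranspose_smul, h1.1.eq, star_trivial]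
    rw [smul_mulVec, dotProduct_smul]
    exact smul_nonneg (by positivity) (h1.dotProduct_mulVec_nonneg x)
  have := sq_psd_mono h2 h3 hpsd
  have hXY : X - Y = B - A := by simp only [hX, hY]; abel
  rwa [hXY] at this
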